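/- Let p be a prime, t ≥ 1, and let C ⊆ (ℤ_{p^t})^n be a nonzero linear code of rank K with minimum Hamming distance d. If d_L(C) > p^{t−1}·μ_p·(n−K), then C is MDR, i.e. d = n−K+1. -/

import Mathlib

/-- Lee weight of an element of `ZMod q`. -/
noncomputable def leeWt {q : ℕ} (a : ZMod q) : ℕ := min (ZMod.val a) (q - ZMod.val a)

/-- Lee weight of a vector over `ZMod q`. -/
noncomputable def leeWtVec {q n : ℕ} (x : Fin n → ZMod q) : ℕ := ∑ i, leeWt (x i)

/-- Minimum Lee distance (= minimum Lee weight of a nonzero codeword) of a linear code. -/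
noncomputable def minLee {q n : ℕ} (C : Submodule (ZMod q) (Fin n → ZMod q)) : ℕ :=
  sInf {w | ∃ x ∈ C, x ≠ 0 ∧ leeWtVec x = w}

/-- Minimum Hamming distance (= minimum Hamming weight of a nonzero codeword). -/
noncomputable def minHam {q n : ℕ} (C : Submodule (ZMod q) (Fin n → ZMod q)) : ℕ :=
  sInf {w | ∃ x ∈ C, x ≠ 0 ∧ hammingNorm x = w}

/-- Average nonzero Lee weight of `ZMod q`. -/
noncomputable def mu (q : ℕ) : ℚ :=
  if Even q then (q : ℚ)^2 / (4 * ((q : ℚ) - 1)) else ((q : ℚ) + 1) / 4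

/-- `Phi n k p`: the maximum minimum Lee distance over `k`-dimensional linear codes
of length `n` over `ZMod p`. -/
noncomputable def Phi (n k p : ℕ) : ℕ :=
  sSup {d | ∃ C : Submodule (ZMod p) (Fin n → ZMod p),
    Module.finrank (ZMod p) ↥C = k ∧ minLee C = d}

/-- Rank of a linear code over `ZMod q`: minimal number of generators. -/
noncomputable def codeRank {q n : ℕ} (C : Submodule (ZMod q) (Fin n → ZMod q)) : ℕ :=
  sInf {m | ∃ s : Finset (Fin n → ZMod q), s.card = m ∧
    Submodule.span (ZMod q) (↑s : Set (Fin n → ZMod q)) = C}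

/-- `PhiR n K q`: the maximum minimum Lee distance over rank-`K` linear codes of
length `n` over `ZMod q`. -/
noncomputable def PhiR (n K q : ℕ) : ℕ :=
  sSup {d | ∃ C : Submodule (ZMod q) (Fin n → ZMod q), codeRank C = K ∧ minLee C = d}

open Finset in

lemma sum_min_eq (p : ℕ) :
    ∑ r ∈ Finset.range p, min r (p - r) = (p / 2) * ((p + 1) / 2) := by
  rcases Nat.lt_or_ge p 2 with h | h
  · interval_cases p <;> simp
  apply Nat.eq_of_mul_eq_mul_right (show 0 < 2 by norm_num)
  have h1 : ∑ r ∈ Finset.Ico 0 (p / 2 + 1), min r (p - r) = ∑ r ∈ Finset.range (p / 2 + 1), r := by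
    rw [← Finset.range_eq_Ico]
    exact Finset.sum_congr rfl fun r hr => by
      rw [Finset.mem_range] at hr; omega
  have h2 : ∑ r ∈ Finset.Ico (p / 2 + 1) p, min r (p - r) = ∑ r ∈ Finset.range (p - p/2), r := by
    have e2 : ∑ r ∈ Finset.Ico (p / 2 + 1) p, min r (p - r)
        = ∑ r ∈ Finset.Ico (p / 2 + 1) p, (p - r) :=
      Finset.sum_congr rfl fun r hr => by rw [Finset.mem_Ico] at hr; omega
    have e3 : ∑ r ∈ Finset.Ico (p / 2 + 1) p, (p - r) = ∑ r ∈ Finset.Ico 1 (p - p/2), r := by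
      have := Finset.sum_Ico_reflect (fun j => j) (p / 2 + 1) (n := p) (m := p) (by omega)
      simpa using this
    have e4 : ∑ r ∈ Finset.Ico 1 (p - p/2), r = ∑ r ∈ Finset.range (p - p/2), r := by
      rw [Finset.range_eq_Ico,
        ← Finset.sum_Ico_consecutive (fun r => r) (Nat.zero_le 1) (show 1 ≤ p - p/2 by omega)]
      simp
    rw [e2, e3, e4]
  have hsplit : ∑ r ∈ Finset.range p, min r (p - r)
      = (∑ r ∈ Finset.range (p / 2 + 1), r) + ∑ r ∈ Finset.range (p - p/2), r := by
    rw [← h1, ← h2, Finset.range_eq_Ico,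
      ← Finset.sum_Ico_consecutive (fun r => min r (p - r)) (Nat.zero_le _)
        (show p / 2 + 1 ≤ p by omega)]
  rw [hsplit, add_mul, Finset.sum_range_id_mul_two, Finset.sum_range_id_mul_two]
  obtain ⟨k, hk | hk⟩ := Nat.even_or_odd' p <;> subst hk
  · have e1 : 2 * k / 2 = k := by omega
    have e2 : 2 * k - k = k := by omega
    have e3 : (2 * k + 1) / 2 = k := by omega
    rw [e1, e2, e3]
    cases k with
    | zero => simp
    | succ j => simp only [Nat.add_sub_cancel]; ring
  · have e1 : (2 * k + 1) / 2 = k := by omega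
    have e2 : 2 * k + 1 - k = k + 1 := by omega
    have e3 : (2 * k + 1 + 1) / 2 = k + 1 := by omega
    rw [e1, e2, e3]
    simp only [Nat.add_sub_cancel]
    ring

lemma sum_zmod_lee (p : ℕ) [NeZero p] (hp : 2 ≤ p) :
    ((∑ a : ZMod p, min a.val (p - a.val) : ℕ) : ℚ) = ((p : ℚ) - 1) * mu p := by
  have h1 : ∑ a : ZMod p, min a.val (p - a.val) = ∑ r ∈ Finset.range p, min r (p - r) := by
    apply Finset.sum_nbij' (i := fun (a : ZMod p) => a.val) (j := fun r => (r : ZMod p))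
    · intro a _; exact Finset.mem_range.mpr (ZMod.val_lt a)
    · intro r _; exact Finset.mem_univ _
    · intro a _; exact ZMod.natCast_zmod_val a
    · intro r hr; exact ZMod.val_natCast_of_lt (Finset.mem_range.mp hr)
    · intro a _; rfl
  rw [h1, sum_min_eq]
  obtain ⟨k, hk | hk⟩ := Nat.even_or_odd' p <;> subst hk
  · have e1 : 2 * k / 2 = k := by omega
    have e3 : (2 * k + 1) / 2 = k := by omega
    rw [e1, e3, mu, if_pos (by exact ⟨k, by ring⟩)]
    have hk1 : (1 : ℚ) ≤ (k : ℚ) := by exact_mod_cast (show 1 ≤ k by omega)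
    have h4 : 4 * (((2 * k : ℕ) : ℚ) - 1) ≠ 0 := by push_cast; intro h; linarith
    rw [mul_div_assoc', eq_div_iff h4]
    push_cast
    ring
  · have e1 : (2 * k + 1) / 2 = k := by omega
    have e3 : (2 * k + 1 + 1) / 2 = k + 1 := by omega
    rw [e1, e3, mu, if_neg (by simp [Nat.even_add_one, parity_simps])]
    push_cast
    ring

lemma sum_lee_mul (p : ℕ) [Fact p.Prime] (m : ZMod p) (hm : m ≠ 0) :
    ∑ a : ZMod p, min (a * m).val (p - (a * m).val) = ∑ a : ZMod p, min a.val (p - a.val) :=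
  Fintype.sum_bijective (· * m) (mulRight_bijective₀ m hm) _ _ (fun a => rfl)

lemma gen_bound {q : ℕ} [NeZero q] {ι : Type} [Fintype ι] [DecidableEq ι]
    (N : Submodule (ZMod q) (ι → ZMod q)) :
    ∃ s : Finset (ι → ZMod q), s.card ≤ Fintype.card ι ∧
      Submodule.span (ZMod q) (↑s : Set (ι → ZMod q)) = N := by
  classical
  let f : (ι → ℤ) →ₗ[ℤ] (ι → ZMod q) :=
    { toFun := fun v i => ((v i : ℤ) : ZMod q)
      map_add' := by intro x y; ext i; simp [Pi.add_apply]
      map_smul' := by intro c x; ext i; simp [Pi.smul_apply, smul_eq_mul] }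
  have hf : Function.Surjective f := by
    intro w
    refine ⟨fun i => ((w i).val : ℤ), ?_⟩
    ext i
    simp [f, ZMod.natCast_val, ZMod.intCast_cast, ZMod.cast_id]
  let N' : Submodule ℤ (ι → ℤ) := (N.restrictScalars ℤ).comap f
  obtain ⟨r, b⟩ := Submodule.basisOfPid (Pi.basisFun ℤ ι) N'
  have hr : r ≤ Fintype.card ι := by
    have hli : LinearIndependent ℤ (fun i : Fin r => (N'.subtype (b i) : ι → ℤ)) :=
      b.linearIndependent.map' N'.subtype (Submodule.ker_subtype N')
    have := hli.fintype_card_le_finrank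
    simpa using this
  have hmap : Submodule.map f N' = N.restrictScalars ℤ :=
    Submodule.map_comap_eq_of_surjective hf _
  have hspanN' : Submodule.span ℤ (Set.range fun i : Fin r => (b i : ι → ℤ)) = N' := by
    have h1 : (Set.range fun i : Fin r => (b i : ι → ℤ)) =
        N'.subtype '' Set.range b := by
      rw [← Set.range_comp]; rfl
    rw [h1, ← Submodule.map_span, b.span_eq, Submodule.map_top, Submodule.range_subtype]
  have hspan : Submodule.span ℤ (Set.range fun i : Fin r => f (b i : ι → ℤ)) =
      N.restrictScalars ℤ := by
    have h1 : (Set.range fun i : Fin r => f (b i : ι → ℤ)) =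
        f '' (Set.range fun i : Fin r => (b i : ι → ℤ)) := by
      rw [← Set.range_comp]; rfl
    rw [h1, ← Submodule.map_span, hspanN', hmap]
  refine ⟨Finset.univ.image (fun i : Fin r => f (b i : ι → ℤ)), ?_, ?_⟩
  · exact le_trans Finset.card_image_le (by simp [hr])
  · have hset : (↑(Finset.univ.image fun i : Fin r => f (b i : ι → ℤ)) :
        Set (ι → ZMod q)) = Set.range fun i : Fin r => f (b i : ι → ℤ) := by
      simp
    rw [hset]
    apply le_antisymm
    · rw [Submodule.span_le]
      intro x hx
      have : x ∈ Submodule.span ℤ (Set.range fun i : Fin r => f (b i : ι → ℤ)) :=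
        Submodule.subset_span hx
      rw [hspan] at this
      exact this
    · intro x hx
      have : x ∈ Submodule.span ℤ (Set.range fun i : Fin r => f (b i : ι → ℤ)) := by
        rw [hspan]; exact hx
      exact Submodule.span_le_restrictScalars ℤ (ZMod q) _ this

lemma singleton_bound {q n : ℕ} [NeZero q] (C : Submodule (ZMod q) (Fin n → ZMod q))
    (hC : C ≠ ⊥) : codeRank C + minHam C ≤ n + 1 := by
  classical
  obtain ⟨c0, hc0C, hc00⟩ := (Submodule.ne_bot_iff C).mp hC
  have hne : {w | ∃ x ∈ C, x ≠ 0 ∧ hammingNorm x = w}.Nonempty := ⟨_, c0, hc0C, hc00, rfl⟩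
  obtain ⟨c, hcC, hc0, hcd⟩ : ∃ x ∈ C, x ≠ 0 ∧ hammingNorm x = minHam C := Nat.sInf_mem hne
  set d := minHam C with hd
  have hd1 : 1 ≤ d := by rw [← hcd]; exact hammingNorm_pos_iff.mpr hc0
  have hdn : d ≤ n := by
    rw [← hcd]
    simpa using (hammingNorm_le_card_fintype (x := c))
  obtain ⟨T, -, hTcard⟩ := Finset.exists_subset_card_eq
    (s := (Finset.univ : Finset (Fin n))) (n := d - 1) (by simp; omega)
  let π : (Fin n → ZMod q) →ₗ[ZMod q] ({x : Fin n // x ∈ Tᶜ} → ZMod q) :=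
    LinearMap.funLeft (ZMod q) (ZMod q) (fun i => (i : Fin n))
  have hinj : ∀ x ∈ C, π x = 0 → x = 0 := by
    intro x hx hπ
    by_contra hx0
    have h1 : d ≤ hammingNorm x := Nat.sInf_le ⟨x, hx, hx0, rfl⟩
    have hsub : ({i | x i ≠ 0} : Finset (Fin n)) ⊆ T := by
      intro i hi
      simp only [Finset.mem_filter, Finset.mem_univ, true_and, ne_eq] at hi
      by_contra hiT
      exact hi (congrFun hπ ⟨i, Finset.mem_compl.mpr hiT⟩)
    have h2 : hammingNorm x ≤ T.card := Finset.card_le_card hsub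
    omega
  obtain ⟨s, hscard, hsspan⟩ := gen_bound (Submodule.map π C)
  have hcardc : Fintype.card {x : Fin n // x ∈ Tᶜ} = n - (d - 1) := by
    simp [Finset.card_compl, hTcard]
  set g : ({x : Fin n // x ∈ Tᶜ} → ZMod q) → (Fin n → ZMod q) :=
    fun y => if h : ∃ x ∈ C, π x = y then h.choose else 0 with hg
  have hgmem : ∀ y ∈ s, g y ∈ C ∧ π (g y) = y := by
    intro y hy
    have hyN : y ∈ Submodule.map π C := by
      rw [← hsspan]; exact Submodule.subset_span hy
    obtain ⟨x, hx, hxy⟩ := Submodule.mem_map.mp hyN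
    have hex : ∃ x ∈ C, π x = y := ⟨x, hx, hxy⟩
    rw [hg]; simp only [dif_pos hex]
    exact ⟨hex.choose_spec.1, hex.choose_spec.2⟩
  set sC := s.image g with hsC
  have hle : Submodule.span (ZMod q) (↑sC : Set (Fin n → ZMod q)) ≤ C := by
    rw [Submodule.span_le]
    intro v hv
    simp only [hsC, Finset.coe_image, Set.mem_image, Finset.mem_coe] at hv
    obtain ⟨y, hy, rfl⟩ := hv
    exact (hgmem y hy).1
  have himg : sC.image (fun v => π v) = s := by
    rw [hsC, Finset.image_image]
    rw [show ((fun v => π v) ∘ g) = fun y => π (g y) from rfl]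
    rw [Finset.image_congr (g := id) (fun y hy => (hgmem y (by simpa using hy)).2)]
    exact Finset.image_id
  have hspanC : Submodule.span (ZMod q) (↑sC : Set (Fin n → ZMod q)) = C := by
    apply le_antisymm hle
    intro x hx
    have h1 : π x ∈ Submodule.map π C := Submodule.mem_map_of_mem hx
    have h2 : Submodule.map π C
        = Submodule.map π (Submodule.span (ZMod q) (↑sC : Set (Fin n → ZMod q))) := by
      rw [Submodule.map_span, ← Finset.coe_image, himg, hsspan]
    rw [h2] at h1
    obtain ⟨z, hz, hzx⟩ := Submodule.mem_map.mp h1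
    have hzC : z ∈ C := hle hz
    have : x - z = 0 := by
      apply hinj _ (Submodule.sub_mem _ hx hzC)
      rw [map_sub, hzx, sub_self]
    have hxz : x = z := by rwa [sub_eq_zero] at this
    rwa [hxz]
  have hrank : codeRank C ≤ sC.card := Nat.sInf_le ⟨sC, rfl, hspanC⟩
  have : sC.card ≤ s.card := Finset.card_image_le
  rw [hcardc] at hscard
  omega

lemma lee_le_nat (p t n : ℕ) [NeZero p] (hp : p.Prime) (ht : 1 ≤ t)
    (C : Submodule (ZMod (p^t)) (Fin n → ZMod (p^t))) (hC : C ≠ ⊥) :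
    (p - 1) * minLee C
      ≤ p^(t-1) * (minHam C * ∑ a : ZMod p, min a.val (p - a.val)) := by
  classical
  haveI : Fact p.Prime := ⟨hp⟩
  haveI : NeZero (p^t) := ⟨pow_ne_zero t hp.ne_zero⟩
  obtain ⟨c0, hc0C, hc00⟩ := (Submodule.ne_bot_iff C).mp hC
  have hne : {w | ∃ x ∈ C, x ≠ 0 ∧ hammingNorm x = w}.Nonempty := ⟨_, c0, hc0C, hc00, rfl⟩
  obtain ⟨c, hcC, hc0, hcd⟩ : ∃ x ∈ C, x ≠ 0 ∧ hammingNorm x = minHam C := Nat.sInf_mem hne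
  -- find z
  have hPt : ((p : ZMod (p^t)))^t • c = 0 := by
    have h0 : ((p : ZMod (p^t)))^t = 0 := by
      rw [← Nat.cast_pow, ZMod.natCast_self]
    rw [h0, zero_smul]
  have hex : ∃ k, ((p : ZMod (p^t)))^k • c = 0 := ⟨t, hPt⟩
  set j := Nat.find hex with hjdef
  have hj : ((p : ZMod (p^t)))^j • c = 0 := Nat.find_spec hex
  have hj0 : j ≠ 0 := by
    intro h
    rw [h, pow_zero, one_smul] at hj
    exact hc0 hj
  set z : Fin n → ZMod (p^t) := ((p : ZMod (p^t)))^(j-1) • c with hz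
  have hz0 : z ≠ 0 := Nat.find_min hex (show j - 1 < j by omega)
  have hzC : z ∈ C := Submodule.smul_mem _ _ hcC
  have hpz : (p : ZMod (p^t)) • z = 0 := by
    rw [hz, smul_smul, ← pow_succ']
    rw [show j - 1 + 1 = j by omega]
    exact hj
  have hzsupp : ∀ i, c i = 0 → z i = 0 := by
    intro i hci
    rw [hz]
    simp [hci]
  -- coordinates of z
  have key : ∀ i, ∃ m, m < p ∧ (z i).val = p^(t-1) * m := by
    intro i
    have h1 : (p : ZMod (p^t)) * z i = 0 := by
      have := congrFun hpz i
      simpa [Pi.smul_apply, smul_eq_mul] using this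
    have h2 : ((p * (z i).val : ℕ) : ZMod (p^t)) = 0 := by
      rw [Nat.cast_mul, ZMod.natCast_zmod_val]
      exact h1
    have h3 : p^t ∣ p * (z i).val := (ZMod.natCast_eq_zero_iff _ _).mp h2
    obtain ⟨k, hk⟩ := h3
    have hpt : p^t = p * p^(t-1) := by
      rw [← pow_succ']
      congr 1
      omega
    have h4 : (z i).val = p^(t-1) * k :=
      Nat.eq_of_mul_eq_mul_left hp.pos (by rw [hk, hpt]; ring)
    refine ⟨k, ?_, h4⟩
    have hvlt : (z i).val < p^t := ZMod.val_lt _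
    have hvlt2 : p^(t-1) * k < p^(t-1) * p := by
      rw [← h4]
      calc (z i).val < p^t := hvlt
        _ = p^(t-1) * p := by rw [hpt]; ring
    exact Nat.lt_of_mul_lt_mul_left hvlt2
  set m : Fin n → ℕ := fun i => (key i).choose with hm
  have hmlt : ∀ i, m i < p := fun i => (key i).choose_spec.1
  have hmval : ∀ i, (z i).val = p^(t-1) * m i := fun i => (key i).choose_spec.2
  -- per coordinate Lee weight
  have hcoord : ∀ (a : ZMod p) (i : Fin n),
      leeWt ((a.val • z) i)
        = p^(t-1) * min ((a * (m i : ZMod p)).val) (p - (a * (m i : ZMod p)).val) := by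
    intro a i
    have h1 : (a.val • z) i = ((a.val * (z i).val : ℕ) : ZMod (p^t)) := by
      rw [Pi.smul_apply, Nat.cast_mul, ZMod.natCast_zmod_val, nsmul_eq_mul]
    have h2 : ((a.val • z) i).val = p^(t-1) * ((a.val * m i) % p) := by
      rw [h1, ZMod.val_natCast, hmval i]
      have : a.val * (p^(t-1) * m i) = p^(t-1) * (a.val * m i) := by ring
      rw [this, show p^t = p^(t-1) * p by rw [← pow_succ]; congr 1; omega]
      exact Nat.mul_mod_mul_left _ _ _
    have h3 : (a * (m i : ZMod p)).val = a.val * m i % p := by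
      rw [ZMod.val_mul, ZMod.val_natCast, Nat.mul_mod_mod]
    rw [leeWt, h2, h3]
    have hrlt : a.val * m i % p ≤ p := le_of_lt (Nat.mod_lt _ hp.pos)
    rw [show p^t = p^(t-1) * p by rw [← pow_succ]; congr 1; omega]
    rw [← Nat.mul_sub, min_mul_mul_left]
  -- vector Lee weight
  have hvec : ∀ a : ZMod p,
      leeWtVec (a.val • z)
        = p^(t-1) * ∑ i, min ((a * (m i : ZMod p)).val) (p - (a * (m i : ZMod p)).val) := by
    intro a
    rw [leeWtVec, Finset.mul_sum]
    exact Finset.sum_congr rfl fun i _ => hcoord a i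
  -- each nonzero a gives a codeword
  have hmem : ∀ a : ZMod p, a ≠ 0 → minLee C ≤ leeWtVec (a.val • z) := by
    intro a ha
    have hin : a.val • z ∈ C := by
      rw [← Nat.cast_smul_eq_nsmul (ZMod (p^t))]
      exact Submodule.smul_mem _ _ hzC
    have hav : a.val ≠ 0 := fun h => ha (by rwa [← ZMod.val_eq_zero])
    have hunit : IsUnit ((a.val : ℕ) : ZMod (p^t)) := by
      rw [ZMod.isUnit_iff_coprime]
      exact (Nat.coprime_comm.mp ((Nat.Prime.coprime_iff_not_dvd hp).mpr
        (Nat.not_dvd_of_pos_of_lt (Nat.pos_of_ne_zero hav) (ZMod.val_lt a)))).pow_right t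
    have hnz : a.val • z ≠ 0 := by
      rw [← Nat.cast_smul_eq_nsmul (ZMod (p^t))]
      intro h
      exact hz0 (hunit.smul_eq_zero.mp h)
    exact Nat.sInf_le ⟨a.val • z, hin, hnz, rfl⟩
  set S := ∑ a : ZMod p, min a.val (p - a.val) with hS
  have hboundS : ∀ i : Fin n,
      (∑ a : ZMod p, min ((a * (m i : ZMod p)).val) (p - (a * (m i : ZMod p)).val)) ≤ S := by
    intro i
    by_cases hmi : ((m i : ZMod p)) = 0
    · simp [hmi]
    · rw [sum_lee_mul p _ hmi]
  have hfilter : ({i | c i ≠ 0} : Finset (Fin n)).card = minHam C := by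
    rw [← hcd, hammingNorm]
  have hinner : (∑ i, ∑ a : ZMod p,
      min ((a * (m i : ZMod p)).val) (p - (a * (m i : ZMod p)).val)) ≤ minHam C * S := by
    have hzero : ∀ i ∈ (Finset.univ : Finset (Fin n)),
        i ∉ ({i | c i ≠ 0} : Finset (Fin n)) →
        (∑ a : ZMod p, min ((a * (m i : ZMod p)).val) (p - (a * (m i : ZMod p)).val)) = 0 := by
      intro i _ hi
      have hci : c i = 0 := by
        simpa using hi
      have hzi : z i = 0 := hzsupp i hci
      have hmi : m i = 0 := by
        have h0 := hmval i
        rw [hzi] at h0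
        simp only [ZMod.val_zero] at h0
        rcases Nat.mul_eq_zero.mp h0.symm with h | h
        · exact absurd h (pow_pos hp.pos _).ne'
        · exact h
      simp [hmi]
    rw [← Finset.sum_subset (Finset.subset_univ ({i | c i ≠ 0} : Finset (Fin n))) hzero]
    calc (∑ i ∈ ({i | c i ≠ 0} : Finset (Fin n)), ∑ a : ZMod p,
          min ((a * (m i : ZMod p)).val) (p - (a * (m i : ZMod p)).val))
        ≤ ({i | c i ≠ 0} : Finset (Fin n)).card • S :=
          Finset.sum_le_card_nsmul _ _ _ (fun i _ => hboundS i)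
      _ = minHam C * S := by rw [smul_eq_mul, hfilter]
  have hcard : (Finset.univ.erase (0 : ZMod p)).card = p - 1 := by
    rw [Finset.card_erase_of_mem (Finset.mem_univ _), Finset.card_univ, ZMod.card]
  calc (p - 1) * minLee C
      = ∑ _a ∈ Finset.univ.erase (0 : ZMod p), minLee C := by
        rw [Finset.sum_const, hcard, smul_eq_mul]
    _ ≤ ∑ a ∈ Finset.univ.erase (0 : ZMod p), leeWtVec (a.val • z) :=
        Finset.sum_le_sum (fun a ha => hmem a (Finset.ne_of_mem_erase ha))
    _ ≤ ∑ a : ZMod p, leeWtVec (a.val • z) :=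
        Finset.sum_le_sum_of_subset (Finset.subset_univ _)
    _ = ∑ a : ZMod p, p^(t-1) * ∑ i,
          min ((a * (m i : ZMod p)).val) (p - (a * (m i : ZMod p)).val) :=
        Finset.sum_congr rfl fun a _ => hvec a
    _ = p^(t-1) * ∑ i, ∑ a : ZMod p,
          min ((a * (m i : ZMod p)).val) (p - (a * (m i : ZMod p)).val) := by
        rw [← Finset.mul_sum, Finset.sum_comm]
    _ ≤ p^(t-1) * (minHam C * S) := Nat.mul_le_mul_left _ hinner

theorem lee_gt_implies_MDR (p t n K d : ℕ) (hp : p.Prime) (ht : 1 ≤ t)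
    (C : Submodule (ZMod (p ^ t)) (Fin n → ZMod (p ^ t))) (hC : C ≠ ⊥)
    (hK : codeRank C = K)
    (hd : minHam C = d)
    (hL : (p : ℚ) ^ (t - 1) * mu p * ((n : ℚ) - (K : ℚ)) < (minLee C : ℚ)) :
    (d : ℤ) = (n : ℤ) - (K : ℤ) + 1 := by
  classical
  haveI : Fact p.Prime := ⟨hp⟩
  haveI : NeZero p := ⟨hp.ne_zero⟩
  haveI : NeZero (p ^ t) := ⟨pow_ne_zero t hp.ne_zero⟩
  have hnat := lee_le_nat p t n hp ht C hC
  have hS := sum_zmod_lee p hp.two_le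
  have hp1 : (1 : ℚ) < (p : ℚ) := by exact_mod_cast hp.one_lt
  have hmu : 0 < mu p := by
    rw [mu]; split_ifs with h
    · apply div_pos (by positivity) (by linarith)
    · positivity
  have hLee : (minLee C : ℚ) ≤ (p : ℚ)^(t-1) * mu p * (minHam C : ℚ) := by
    have h2 : (((p - 1) * minLee C : ℕ) : ℚ)
        ≤ ((p^(t-1) * (minHam C * ∑ a : ZMod p, min a.val (p - a.val)) : ℕ) : ℚ) := by
      exact_mod_cast hnat
    rw [Nat.cast_mul, Nat.cast_mul, Nat.cast_mul, Nat.cast_sub hp.one_le,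
      Nat.cast_pow, Nat.cast_one, hS] at h2
    have h3 : ((p : ℚ) - 1) * (minLee C : ℚ)
        ≤ ((p : ℚ) - 1) * ((p : ℚ)^(t-1) * mu p * (minHam C : ℚ)) := by
      calc ((p : ℚ) - 1) * (minLee C : ℚ)
          ≤ (p : ℚ)^(t-1) * ((minHam C : ℚ) * (((p : ℚ) - 1) * mu p)) := h2
        _ = ((p : ℚ) - 1) * ((p : ℚ)^(t-1) * mu p * (minHam C : ℚ)) := by ring
    exact le_of_mul_le_mul_left h3 (by linarith)
  have hSing : codeRank C + minHam C ≤ n + 1 := singleton_bound C hC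
  rw [hK, hd] at hSing
  rw [hd] at hLee
  have hfac : 0 < (p : ℚ)^(t-1) * mu p := mul_pos (pow_pos (by linarith) _) hmu
  have hlt : (n : ℚ) - (K : ℚ) < (d : ℚ) := by
    by_contra hcon
    push_neg at hcon
    have hmono : (p : ℚ)^(t-1) * mu p * (d : ℚ)
        ≤ (p : ℚ)^(t-1) * mu p * ((n : ℚ) - (K : ℚ)) :=
      mul_le_mul_of_nonneg_left hcon (le_of_lt hfac)
    linarith [hL, hLee]
  have hlt2 : (n : ℤ) - (K : ℤ) < (d : ℤ) := by exact_mod_cast hlt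
  omega
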